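/- (Envelope domination) Let λ ∈ (0,1) and let F_0 be a convex CDF on [0,1] with F_0(0) = 0, right derivative f_0(λ⁺) at λ, and F_0(λ) < 1. Define g_0(λ⁺) = f_0(λ⁺)/(1 - F_0(λ)) and suppose g_mix(λ⁺) ≥ g_0(λ⁺). Define F_fit(λ) = λ·g_mix(λ⁺)/(1 + λ·g_mix(λ⁺)), and F_fit(x) = (F_fit(λ)/λ)·x for x ∈ (0,λ], and F_fit(x) = F_fit(λ) + (1 - F_fit(λ))·G_mix(x) for x ∈ (λ,1], where G_mix is a right-tail CDF on [λ,1] satisfying G_mix(x) ≥ G_0(x) := (F_0(x) - F_0(λ))/(1 - F_0(λ)). Then F_fit(x) ≥ F_0(x) for all x ∈ (0,1]. -/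

import Mathlib

open Set

/-- Envelope domination (Proposition 1): the fitted envelope, anchored at the
right-tail boundary density and reconstructed linearly on `(0,lam]` and via the
dominated right-tail CDF on `(lam,1]`, dominates the convex null CDF `F0`
pointwise on `(0,1]`. -/
theorem stmt11 (lam : ℝ) (hlam : lam ∈ Set.Ioo (0:ℝ) 1)
    (F0 : ℝ → ℝ) (hconv : ConvexOn ℝ (Set.Icc (0:ℝ) 1) F0) (hF00 : F0 0 = 0)
    (hF0lt1 : F0 lam < 1) (hF0nonneg : ∀ x ∈ Set.Icc (0:ℝ) 1, 0 ≤ F0 x)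
    (f0 : ℝ) (hderiv : HasDerivWithinAt F0 f0 (Set.Ici lam) lam)
    (gmix : ℝ) (hgmix : f0 / (1 - F0 lam) ≤ gmix)
    (Gmix : ℝ → ℝ)
    (hGmixrange : ∀ x ∈ Set.Icc lam 1, Gmix x ∈ Set.Icc (0:ℝ) 1)
    (hGdom : ∀ x ∈ Set.Icc lam 1, (F0 x - F0 lam) / (1 - F0 lam) ≤ Gmix x) :
    ∀ x ∈ Set.Ioc (0:ℝ) 1,
      F0 x ≤
        (if x ≤ lam then
          (lam * gmix / (1 + lam * gmix) / lam) * x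
        else
          lam * gmix / (1 + lam * gmix)
            + (1 - lam * gmix / (1 + lam * gmix)) * Gmix x) := by
  obtain ⟨hl0, hl1⟩ := hlam
  set A := F0 lam with hA
  have hA0 : 0 ≤ A := hF0nonneg lam ⟨hl0.le, hl1.le⟩
  have h1A : 0 < 1 - A := by linarith
  -- right derivative dominates the secant slope from 0 to lam
  have hslope : A / lam ≤ f0 := by
    have htend : Filter.Tendsto (slope F0 lam)
        (nhdsWithin lam (Set.Ici lam \ {lam})) (nhds f0) :=
      hasDerivWithinAt_iff_tendsto_slope.mp hderiv
    have hset : Set.Ici lam \ {lam} = Set.Ioi lam := by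
      ext y
      simp only [Set.mem_diff, Set.mem_Ici, Set.mem_singleton_iff, Set.mem_Ioi]
      constructor
      · rintro ⟨h1, h2⟩; exact lt_of_le_of_ne h1 (Ne.symm h2)
      · intro h; exact ⟨h.le, h.ne'⟩
    rw [hset] at htend
    refine ge_of_tendsto htend ?_
    have h1 : ∀ᶠ y in nhdsWithin lam (Set.Ioi lam), y < 1 :=
      (eventually_lt_nhds hl1).filter_mono nhdsWithin_le_nhds
    have h2 : ∀ᶠ y in nhdsWithin lam (Set.Ioi lam), y ∈ Set.Ioi lam :=
      eventually_mem_nhdsWithin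
    filter_upwards [h1, h2] with y hy1 hy2
    have hly : lam < y := hy2
    have key := hconv.slope_mono_adjacent
      (x := 0) (y := lam) (z := y)
      ⟨le_refl 0, zero_le_one⟩ ⟨(hl0.trans hly).le, hy1.le⟩ hl0 hly
    rw [slope_def_field]
    calc A / lam = (F0 lam - F0 0) / (lam - 0) := by rw [hF00, hA]; ring_nf
      _ ≤ (F0 y - F0 lam) / (y - lam) := key
  have hf0 : 0 ≤ f0 := le_trans (div_nonneg hA0 hl0.le) hslope
  have hgm0 : 0 ≤ gmix := le_trans (div_nonneg hf0 h1A.le) hgmix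
  set t := lam * gmix with ht
  have ht0 : 0 ≤ t := mul_nonneg hl0.le hgm0
  have h1t : 0 < 1 + t := by linarith
  have htA : A ≤ t * (1 - A) := by
    have h1 : A / lam / (1 - A) ≤ gmix := le_trans (by gcongr) hgmix
    have h2 : A / (lam * (1 - A)) ≤ gmix := by
      rwa [div_div] at h1
    rw [div_le_iff₀ (by positivity)] at h2
    nlinarith
  set c := t / (1 + t) with hc
  have hcA : A ≤ c := by
    rw [hc, le_div_iff₀ h1t]
    nlinarith
  have hc1 : c ≤ 1 := by
    rw [hc, div_le_one h1t]; linarith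
  intro x hx
  obtain ⟨hx0, hx1⟩ := hx
  by_cases hxl : x ≤ lam
  · simp only [hxl, if_true]
    have hcomb : F0 x ≤ (x / lam) * A := by
      have hb0 : 0 ≤ x / lam := div_nonneg hx0.le hl0.le
      have hb1 : x / lam ≤ 1 := (div_le_one hl0).mpr hxl
      have := hconv.2 (⟨le_refl 0, zero_le_one⟩ : (0:ℝ) ∈ Set.Icc (0:ℝ) 1)
        ⟨hl0.le, hl1.le⟩ (by linarith : (0:ℝ) ≤ 1 - x / lam) hb0 (by ring)
      have hxeq : (1 - x / lam) • (0:ℝ) + (x / lam) • lam = x := by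
        simp only [smul_eq_mul, mul_zero, zero_add]
        field_simp
      rw [hxeq] at this
      simpa [hF00] using this
    calc F0 x ≤ (x / lam) * A := hcomb
      _ ≤ (x / lam) * c := by gcongr
      _ = t / (1 + t) / lam * x := by rw [hc]; ring
  · simp only [hxl, if_false]
    have hlx : lam < x := lt_of_not_ge hxl
    have hxm : x ∈ Set.Icc lam 1 := ⟨hlx.le, hx1⟩
    have hG := hGdom x hxm
    have hG1 : Gmix x ≤ 1 := (hGmixrange x hxm).2
    have hu1 : F0 x ≤ 1 := by
      have := le_trans hG hG1
      rw [div_le_one h1A] at this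
      linarith
    have h1c : 0 ≤ 1 - c := by linarith
    have step1 : c + (1 - c) * ((F0 x - A) / (1 - A)) ≤ c + (1 - c) * Gmix x := by
      gcongr
    refine le_trans ?_ step1
    rw [← sub_nonneg]
    have : c + (1 - c) * ((F0 x - A) / (1 - A)) - F0 x
        = (c - A) * (1 - F0 x) / (1 - A) := by
      field_simp
      ring
    rw [this]
    exact div_nonneg (mul_nonneg (by linarith) (by linarith)) h1A.le
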